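/- Let n ≥ 4 and let G be a simple graph on vertices {v_0, …, v_{n−1}} that contains the Hamiltonian cycle v_0 v_1 ⋯ v_{n−1} v_0 and in which no two chords cross. Suppose that in the game of Surrounding Cops and Robbers on G a position is reached in which two cops occupy the endpoints of an edge v_i v_j of G and the robber occupies a vertex of the arc X = {v_{i+1}, …, v_{j−1}} (indices modulo n). Then the cop player, using these two cops together with one additional cop, has a strategy guaranteeing that the robber never occupies a vertex outside X, and that after a finite number of moves either the robber is surrounded or a position is reached in which two cops occupy the endpoints of an edge v_k v_l of G and the robber occupies a vertex of the arc {v_{k+1}, …, v_{l−1}}, which is a proper subset of X. -/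

import Mathlib

/-!
Formalization of the game of Surrounding Cops and Robbers, played on a simple
graph `G` by a cop player controlling `m` cops and a robber player controlling
one robber, with perfect information.  The cops are placed first, then the
robber is placed on a vertex not occupied by a cop; thereafter players
alternate turns (cops first), each pawn moving along an edge or staying put,
and the robber may never end his turn on a vertex occupied by a cop.  The cop
player wins if at some point every neighbor of the robber's vertex is occupied
by a cop.
-/

/-- One step of a cop or of the robber: stay in place or move along an edge. -/
def stepRel {V : Type*} (G : SimpleGraph V) (x y : V) : Prop := x = y ∨ G.Adj x y

/-- `histList r t = [r 0, r 1, …, r (t-1)]`: the robber's first `t` positions. -/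
def histList {V : Type*} (r : ℕ → V) (t : ℕ) : List V := (List.range t).map r

/-- A cop strategy for `m` cops is a function `F` assigning to each finite history of
robber positions the current positions of the cops; `F []` is the initial placement,
made before the robber is placed, and `F (h ++ [x])` is the cops' answer after the
robber history `h` has been extended by the robber move `x`.  The strategy is valid
if each cop always moves along an edge or stays put. -/
def ValidCopStrategy {V : Type*} (G : SimpleGraph V) {m : ℕ}
    (F : List V → Fin m → V) : Prop :=
  ∀ (h : List V) (x : V) (i : Fin m), stepRel G (F h i) (F (h ++ [x]) i)

/-- An infinite robber play `r` against the cop strategy `F` is legal if the robber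
always moves along an edge or stays put, and never ends a turn on a vertex occupied
by a cop (`r 0` is the robber's initial placement, chosen after the cops have been
placed at `F []`, and `r t` is chosen when the cops stand at `F (histList r t)`). -/
def LegalPlay {V : Type*} (G : SimpleGraph V) {m : ℕ}
    (F : List V → Fin m → V) (r : ℕ → V) : Prop :=
  (∀ t, stepRel G (r t) (r (t + 1))) ∧ ∀ t, ∀ i, F (histList r t) i ≠ r t

/-- The robber is surrounded at time `t`: after the cops' move in round `t + 1`,
every neighbor of the robber's position `r t` is occupied by a cop. -/
def SurroundedAt {V : Type*} (G : SimpleGraph V) {m : ℕ}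
    (F : List V → Fin m → V) (r : ℕ → V) (t : ℕ) : Prop :=
  ∀ w, G.Adj (r t) w → ∃ i, F (histList r (t + 1)) i = w

/-- `m` cops have a winning strategy in the game of Surrounding Cops and Robbers
on `G`; equivalently, the surrounding cop number satisfies `s(G) ≤ m`. -/
def CopsWin {V : Type*} (G : SimpleGraph V) (m : ℕ) : Prop :=
  ∃ F : List V → Fin m → V, ValidCopStrategy G F ∧
    ∀ r : ℕ → V, LegalPlay G F r → ∃ t, SurroundedAt G F r t

/-- For a graph on `Fin n` containing all Hamiltonian-cycle edges
`v_t v_{t+1 (mod n)}`, a chord is an edge `v_a v_b` with `b ≢ a ± 1 (mod n)`. -/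
def IsChord {n : ℕ} [NeZero n] (G : SimpleGraph (Fin n)) (a b : Fin n) : Prop :=
  G.Adj a b ∧ b ≠ a + 1 ∧ a ≠ b + 1

/-- The arc `{v_{a+1}, …, v_{b-1}}` (indices modulo `n`) of the Hamiltonian cycle
`v_0 v_1 ⋯ v_{n-1} v_0`: the vertices strictly between `a` and `b` when going
around the cycle from `a` towards `b`. -/
def cycArc (n : ℕ) [NeZero n] (a b : Fin n) : Set (Fin n) :=
  {x | 0 < (x - a).val ∧ (x - a).val < (b - a).val}

/-- A legal robber play starting from a reached position: the robber stands at `r0`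
(with the cops at `F []`, about to move), always moves along an edge or stays, and
never ends a turn on a vertex occupied by a cop. -/
def LegalPlayFrom {V : Type*} (G : SimpleGraph V) {m : ℕ}
    (F : List V → Fin m → V) (r0 : V) (r : ℕ → V) : Prop :=
  r 0 = r0 ∧ (∀ t, stepRel G (r t) (r (t + 1))) ∧
    ∀ t, ∀ i, F (histList r (t + 1)) i ≠ r (t + 1)

namespace SCRAux

variable {n : ℕ} [NeZero n]

lemma svals (u v : Fin n) :
    (u.val ≤ v.val ∧ (v - u).val = v.val - u.val) ∨
    (v.val < u.val ∧ (v - u).val = v.val + n - u.val) := by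
  have hu := u.isLt; have hv := v.isLt
  rw [Fin.sub_def]
  rcases le_or_gt u.val v.val with h | h
  · left
    refine ⟨h, ?_⟩
    have h1 : n - u.val + v.val = (v.val - u.val) + n := by omega
    simp only [h1, Nat.add_mod_right]
    exact Nat.mod_eq_of_lt (by omega)
  · right
    refine ⟨h, ?_⟩
    have h1 : n - u.val + v.val = v.val + n - u.val := by omega
    simp only [h1]
    exact Nat.mod_eq_of_lt (by omega)

lemma sub_self_val (a : Fin n) : (a - a).val = 0 := by
  rcases svals a a with ⟨_, h⟩ | ⟨h, _⟩ <;> omega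

lemma sub_val_inj {a u v : Fin n} (h : (u - a).val = (v - a).val) : u = v :=
  sub_left_inj.mp (Fin.val_injective h)

lemma val_one' (hn : 4 ≤ n) : (1 : Fin n).val = 1 := by
  rw [Fin.val_one']; exact Nat.mod_eq_of_lt (by omega)

lemma mem_cycArc {a b x : Fin n} :
    x ∈ cycArc n a b ↔ 0 < (x - a).val ∧ (x - a).val < (b - a).val := Iff.rfl

lemma mem_arc_ne {a b x : Fin n} (hx : x ∈ cycArc n a b) : x ≠ a ∧ x ≠ b := by
  obtain ⟨h1, h2⟩ := hx
  constructor
  · rintro rfl; rw [sub_self_val] at h1; omega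
  · rintro rfl; omega

/-- key crossing lemma: an edge `a b` seals off the arc from `a` to `b`. -/
lemma cross {G : SimpleGraph (Fin n)} (hn : 4 ≤ n)
    (hnc : ∀ a b c d : Fin n, IsChord G a b → IsChord G c d →
      a < c → c < b → b < d → False)
    {a b x y : Fin n} (hadj : G.Adj a b) (hx : x ∈ cycArc n a b)
    (hxy : G.Adj x y) (hy : y ∉ cycArc n a b) (hya : y ≠ a) (hyb : y ≠ b) :
    False := by
  obtain ⟨hX0, hXm⟩ := hx
  have hXlt := (x - a).isLt
  have hmlt := (b - a).isLt
  have hYlt := (y - a).isLt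
  have hYne0 : (y - a).val ≠ 0 := by
    intro h; exact hya (sub_val_inj (by rw [h, sub_self_val]))
  have hYnem : (y - a).val ≠ (b - a).val := fun h => hyb (sub_val_inj h)
  have hmY : (b - a).val < (y - a).val := by
    simp only [mem_cycArc, not_and, not_lt] at hy
    have := hy (by omega)
    omega
  -- chord a b
  have hba1 : b ≠ a + 1 := by
    intro h
    rw [h, add_sub_cancel_left, val_one' hn] at hXm
    omega
  have hab1 : a ≠ b + 1 := by
    intro h
    have h1 : (a - b).val = 1 := by rw [h, add_sub_cancel_left, val_one' hn]
    rcases svals a b with ⟨c1, c2⟩ | ⟨c1, c2⟩ <;> rcases svals b a with ⟨d1, d2⟩ | ⟨d1, d2⟩ <;>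
      omega
  -- chord x y
  have hrw1 : y - x = (y - a) - (x - a) := by abel
  have hrw2 : x - y = (x - a) - (y - a) := by abel
  have syx := svals (x - a) (y - a)
  rw [← hrw1] at syx
  have sxy := svals (y - a) (x - a)
  rw [← hrw2] at sxy
  have hyx1 : y ≠ x + 1 := by
    intro h
    have h1 : (y - x).val = 1 := by rw [h, add_sub_cancel_left, val_one' hn]
    rcases syx with ⟨c1, c2⟩ | ⟨c1, c2⟩ <;> omega
  have hxy1 : x ≠ y + 1 := by
    intro h
    have h1 : (x - y).val = 1 := by rw [h, add_sub_cancel_left, val_one' hn]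
    rcases sxy with ⟨c1, c2⟩ | ⟨c1, c2⟩ <;> omega
  have cab : IsChord G a b := ⟨hadj, hba1, hab1⟩
  have cba : IsChord G b a := ⟨hadj.symm, hab1, hba1⟩
  have cxy : IsChord G x y := ⟨hxy, hyx1, hxy1⟩
  have cyx : IsChord G y x := ⟨hxy.symm, hxy1, hyx1⟩
  have ha := a.isLt
  rcases svals a x with ⟨e1, e2⟩ | ⟨e1, e2⟩ <;>
    rcases svals a b with ⟨f1, f2⟩ | ⟨f1, f2⟩ <;>
      rcases svals a y with ⟨g1, g2⟩ | ⟨g1, g2⟩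
  · exact hnc a b x y cab cxy (Fin.lt_def.mpr (by omega)) (Fin.lt_def.mpr (by omega))
      (Fin.lt_def.mpr (by omega))
  · exact hnc y x a b cyx cab (Fin.lt_def.mpr (by omega)) (Fin.lt_def.mpr (by omega))
      (Fin.lt_def.mpr (by omega))
  · omega
  · exact hnc b a y x cba cyx (Fin.lt_def.mpr (by omega)) (Fin.lt_def.mpr (by omega))
      (Fin.lt_def.mpr (by omega))
  · omega
  · omega
  · omega
  · exact hnc x y b a cxy cba (Fin.lt_def.mpr (by omega)) (Fin.lt_def.mpr (by omega))
      (Fin.lt_def.mpr (by omega))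

set_option linter.unusedSectionVars false

variable {G : SimpleGraph (Fin n)}

lemma arc_partition {a b g : Fin n} (hg : g ∈ cycArc n a b) {x : Fin n}
    (hx : x ∈ cycArc n a b) :
    x ∈ cycArc n a g ∨ x = g ∨ x ∈ cycArc n g b := by
  obtain ⟨hg1, hg2⟩ := hg
  obtain ⟨hx1, hx2⟩ := hx
  have hrw1 : x - g = (x - a) - (g - a) := by abel
  have hrw2 : b - g = (b - a) - (g - a) := by abel
  have s1 := svals (g - a) (x - a); rw [← hrw1] at s1
  have s2 := svals (g - a) (b - a); rw [← hrw2] at s2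
  rcases Nat.lt_trichotomy (x - a).val (g - a).val with h | h | h
  · exact Or.inl ⟨hx1, h⟩
  · exact Or.inr (Or.inl (sub_val_inj h))
  · refine Or.inr (Or.inr ⟨?_, ?_⟩) <;>
      rcases s1 with ⟨c1, c2⟩ | ⟨c1, c2⟩ <;> rcases s2 with ⟨d1, d2⟩ | ⟨d1, d2⟩ <;> omega

lemma arc_right_facts {a b g x : Fin n} (hg : g ∈ cycArc n a b)
    (hx : x ∈ cycArc n g b) :
    x ∈ cycArc n a b ∧ x ∉ cycArc n a g ∧ x ≠ a ∧ x ≠ g ∧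
      (g - a).val < (x - a).val := by
  obtain ⟨hg1, hg2⟩ := hg
  obtain ⟨hx1, hx2⟩ := hx
  have hmlt := (b - a).isLt
  have hxlt := (x - a).isLt
  have hrw1 : x - g = (x - a) - (g - a) := by abel
  have hrw2 : b - g = (b - a) - (g - a) := by abel
  have s1 := svals (g - a) (x - a); rw [← hrw1] at s1
  have s2 := svals (g - a) (b - a); rw [← hrw2] at s2
  have key : (g - a).val < (x - a).val ∧ (x - a).val < (b - a).val := by
    rcases s1 with ⟨c1, c2⟩ | ⟨c1, c2⟩ <;> rcases s2 with ⟨d1, d2⟩ | ⟨d1, d2⟩ <;> omega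
  refine ⟨⟨by omega, key.2⟩, ?_, ?_, ?_, key.1⟩
  · intro ⟨u1, u2⟩; omega
  · intro h; rw [h, sub_self_val] at key; omega
  · intro h; rw [h] at key; omega

lemma arc_left_facts {a b g x : Fin n} (hg : g ∈ cycArc n a b)
    (hx : x ∈ cycArc n a g) :
    x ∈ cycArc n a b ∧ x ∉ cycArc n g b ∧ x ≠ g ∧ x ≠ b := by
  obtain ⟨hg1, hg2⟩ := hg
  obtain ⟨hx1, hx2⟩ := hx
  have hmlt := (b - a).isLt
  have hglt := (g - a).isLt
  have hxab : x ∈ cycArc n a b := ⟨hx1, by omega⟩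
  refine ⟨hxab, ?_, ?_, (mem_arc_ne hxab).2⟩
  · intro ⟨u1, u2⟩
    have hrw1 : x - g = (x - a) - (g - a) := by abel
    have hrw2 : b - g = (b - a) - (g - a) := by abel
    have s1 := svals (g - a) (x - a); rw [← hrw1] at s1
    have s2 := svals (g - a) (b - a); rw [← hrw2] at s2
    rcases s1 with ⟨c1, c2⟩ | ⟨c1, c2⟩ <;> rcases s2 with ⟨d1, d2⟩ | ⟨d1, d2⟩ <;> omega
  · intro h; rw [h] at hx2; omega

/-- The guarded-arc property: every edge leaving the open arc from `a` to `b`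
ends at `a` or `b`. -/
def Closed (G : SimpleGraph (Fin n)) (a b : Fin n) : Prop :=
  ∀ x ∈ cycArc n a b, ∀ y, G.Adj x y → y ∈ cycArc n a b ∨ y = a ∨ y = b

lemma closed_of_adj (hn : 4 ≤ n)
    (hnc : ∀ a b c d : Fin n, IsChord G a b → IsChord G c d →
      a < c → c < b → b < d → False)
    {a b : Fin n} (hadj : G.Adj a b) : Closed G a b := by
  intro x hx y hxy
  by_contra h
  push_neg at h
  exact cross hn hnc hadj hx hxy h.1 h.2.1 h.2.2

open Classical in
noncomputable def nbrSet (G : SimpleGraph (Fin n)) (a b : Fin n) : Finset (Fin n) :=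
  Finset.univ.filter fun w => G.Adj a w ∧ w ∈ cycArc n a b

lemma mem_nbrSet {a b w : Fin n} :
    w ∈ nbrSet G a b ↔ G.Adj a w ∧ w ∈ cycArc n a b := by
  simp [nbrSet]

open Classical in
noncomputable def gf (G : SimpleGraph (Fin n)) (a b : Fin n) : Fin n :=
  if h : (nbrSet G a b).Nonempty then
    (Finset.exists_max_image (nbrSet G a b) (fun w => (w - a).val) h).choose
  else a + 1

lemma nbrSet_nonempty (hn : 4 ≤ n) (hham : ∀ t : Fin n, G.Adj t (t + 1))
    {a b x : Fin n} (hx : x ∈ cycArc n a b) : (nbrSet G a b).Nonempty := by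
  obtain ⟨hx1, hx2⟩ := hx
  refine ⟨a + 1, mem_nbrSet.mpr ⟨hham a, ?_, ?_⟩⟩ <;>
    rw [add_sub_cancel_left, val_one' hn] <;> omega

lemma gf_spec {a b : Fin n} (h : (nbrSet G a b).Nonempty) :
    G.Adj a (gf G a b) ∧ gf G a b ∈ cycArc n a b ∧
      ∀ w, G.Adj a w → w ∈ cycArc n a b → (w - a).val ≤ (gf G a b - a).val := by
  rw [gf, dif_pos h]
  obtain ⟨h1, h2⟩ := (Finset.exists_max_image (nbrSet G a b) (fun w => (w - a).val) h).choose_spec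
  rw [mem_nbrSet] at h1
  exact ⟨h1.1, h1.2, fun w hw1 hw2 => h2 w (mem_nbrSet.mpr ⟨hw1, hw2⟩)⟩

lemma gf_adj (hham : ∀ t : Fin n, G.Adj t (t + 1)) (a b : Fin n) :
    G.Adj a (gf G a b) := by
  rw [gf]
  split
  · next h =>
    have := (Finset.exists_max_image (nbrSet G a b) (fun w => (w - a).val) h).choose_spec
    exact (mem_nbrSet.mp this.1).1
  · exact hham a

lemma closed_sub_right (hn : 4 ≤ n)
    (hnc : ∀ a b c d : Fin n, IsChord G a b → IsChord G c d →
      a < c → c < b → b < d → False)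
    {a b : Fin n} (hcl : Closed G a b) (hne : (nbrSet G a b).Nonempty) :
    Closed G (gf G a b) b := by
  obtain ⟨hgadj, hgarc, hgmax⟩ := gf_spec hne
  intro x hx y hxy
  obtain ⟨hxab, hxnag, hxa, hxg, hgx⟩ := arc_right_facts hgarc hx
  rcases hcl x hxab y hxy with hy | rfl | rfl
  · rcases arc_partition hgarc hy with h1 | h2 | h3
    · exact absurd (cross hn hnc hgadj h1 hxy.symm hxnag hxa hxg) not_false
    · exact Or.inr (Or.inl h2)
    · exact Or.inl h3
  · exact absurd (hgmax x hxy.symm hxab) (by omega)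
  · exact Or.inr (Or.inr rfl)

/-- Strategy state: three cop positions, the indices of the two guards and the
free cop, and the endpoints of the currently guarded arc. -/
structure St (n : ℕ) where
  pos : Fin 3 → Fin n
  ga : Fin 3
  gb : Fin 3
  fr : Fin 3
  a : Fin n
  b : Fin n

open Classical in
/-- Transition of the cop strategy in response to the robber standing at `x`. -/
noncomputable def step (G : SimpleGraph (Fin n)) (s : St n) (x : Fin n) : St n :=
  if s.pos s.fr = gf G s.a s.b then
    if x ∈ cycArc n s.a (gf G s.a s.b) then
      ⟨s.pos, s.ga, s.fr, s.gb, s.a, gf G s.a s.b⟩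
    else if x ∈ cycArc n (gf G s.a s.b) s.b then
      ⟨s.pos, s.fr, s.gb, s.ga, gf G s.a s.b, s.b⟩
    else s
  else if s.pos s.fr = s.a then
    ⟨Function.update s.pos s.fr (gf G s.a s.b), s.ga, s.gb, s.fr, s.a, s.b⟩
  else
    ⟨Function.update s.pos s.fr (s.pos s.fr + 1), s.ga, s.gb, s.fr, s.a, s.b⟩

structure Inv (G : SimpleGraph (Fin n)) (s : St n) : Prop where
  hga : s.pos s.ga = s.a
  hgb : s.pos s.gb = s.b
  hab : s.ga ≠ s.gb
  haf : s.ga ≠ s.fr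
  hbf : s.gb ≠ s.fr
  hcl : Closed G s.a s.b

noncomputable def marchdist (G : SimpleGraph (Fin n)) (s : St n) : ℕ :=
  if s.pos s.fr = gf G s.a s.b then 0 else (s.a - s.pos s.fr).val + 1

noncomputable def phi (G : SimpleGraph (Fin n)) (s : St n) : ℕ :=
  (n + 1) * (s.b - s.a).val + marchdist G s

lemma step_valid (hham : ∀ t : Fin n, G.Adj t (t + 1)) (s : St n) (x : Fin n)
    (idx : Fin 3) : stepRel G (s.pos idx) ((step G s x).pos idx) := by
  unfold step
  split_ifs with h1 h2 h3 h4 <;> try dsimp only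
  · exact Or.inl rfl
  · exact Or.inl rfl
  · exact Or.inl rfl
  · rcases eq_or_ne idx s.fr with rfl | h
    · rw [Function.update_self, h4]
      exact Or.inr (gf_adj hham _ _)
    · rw [Function.update_of_ne h]
      exact Or.inl rfl
  · rcases eq_or_ne idx s.fr with rfl | h
    · rw [Function.update_self]
      exact Or.inr (hham _)
    · rw [Function.update_of_ne h]
      exact Or.inl rfl

lemma phi_lt_of_measure_lt (s s' : St n)
    (h : (s'.b - s'.a).val < (s.b - s.a).val) (h0 : marchdist G s = 0) :
    phi G s' < phi G s := by
  have h1 : marchdist G s' ≤ n := by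
    unfold marchdist
    split
    · omega
    · have := (s'.a - s'.pos s'.fr).isLt; omega
  unfold phi
  rw [h0, Nat.add_zero]
  calc (n + 1) * (s'.b - s'.a).val + marchdist G s'
      ≤ (n + 1) * (s'.b - s'.a).val + n := Nat.add_le_add_left h1 _
    _ < (n + 1) * (s'.b - s'.a).val + (n + 1) := Nat.add_lt_add_left (by omega) _
    _ = (n + 1) * ((s'.b - s'.a).val + 1) := by rw [Nat.mul_succ]
    _ ≤ (n + 1) * (s.b - s.a).val := Nat.mul_le_mul_left _ (by omega)

lemma phi_lt_of_march (s s' : St n) (ha : s'.a = s.a) (hb : s'.b = s.b)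
    (h : marchdist G s' < marchdist G s) : phi G s' < phi G s := by
  unfold phi
  rw [ha, hb]
  exact Nat.add_lt_add_left h _

/-- The main invariant-preservation and progress lemma. -/
lemma step_main (hn : 4 ≤ n) (hham : ∀ t : Fin n, G.Adj t (t + 1))
    (hnc : ∀ a b c d : Fin n, IsChord G a b → IsChord G c d →
      a < c → c < b → b < d → False)
    (s : St n) (x x' : Fin n)
    (hinv : Inv G s) (hx : x ∈ cycArc n s.a s.b)
    (hnocol : ∀ idx, s.pos idx ≠ x)
    (hstep : stepRel G x x') (hnocol' : ∀ idx, (step G s x).pos idx ≠ x') :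
    Inv G (step G s x) ∧ x' ∈ cycArc n (step G s x).a (step G s x).b ∧
      phi G (step G s x) < phi G s := by
  have hne : (nbrSet G s.a s.b).Nonempty := nbrSet_nonempty hn hham hx
  obtain ⟨hgadj, hgarc, hgmax⟩ := gf_spec hne
  by_cases h1 : s.pos s.fr = gf G s.a s.b
  · -- free cop stands at g : split phase
    have hxg : x ≠ gf G s.a s.b := fun h => hnocol s.fr (h1.trans h.symm)
    have hmd0 : marchdist G s = 0 := by rw [marchdist, if_pos h1]
    rcases arc_partition hgarc hx with hx1 | hx1 | hx1
    · -- robber in arc (a, g) : re-guard the left pocket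
      have hs : step G s x = ⟨s.pos, s.ga, s.fr, s.gb, s.a, gf G s.a s.b⟩ := by
        unfold step; rw [if_pos h1, if_pos hx1]
      rw [hs] at hnocol' ⊢
      dsimp only at hnocol' ⊢
      have hclos : Closed G s.a (gf G s.a s.b) := closed_of_adj hn hnc hgadj
      refine ⟨⟨hinv.hga, h1, hinv.haf, hinv.hab, Ne.symm hinv.hbf, hclos⟩, ?_, ?_⟩
      · -- x' stays in the pocket
        have hx'cands : x' ∈ cycArc n s.a (gf G s.a s.b) ∨ x' = s.a ∨ x' = gf G s.a s.b := by
          rcases hstep with rfl | hadj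
          · exact Or.inl hx1
          · exact hclos x hx1 x' hadj
        rcases hx'cands with h | h | h
        · exact h
        · exact absurd (hinv.hga.trans h.symm) (hnocol' s.ga)
        · exact absurd (h1.trans h.symm) (hnocol' s.fr)
      · exact phi_lt_of_measure_lt _ _ hgarc.2 hmd0
    · exact absurd hx1 hxg
    · -- robber in arc (g, b) : re-guard the right region
      have hxnag : x ∉ cycArc n s.a (gf G s.a s.b) := (arc_right_facts hgarc hx1).2.1
      have hs : step G s x = ⟨s.pos, s.fr, s.gb, s.ga, gf G s.a s.b, s.b⟩ := by
        unfold step; rw [if_pos h1, if_neg hxnag, if_pos hx1]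
      rw [hs] at hnocol' ⊢
      dsimp only at hnocol' ⊢
      have hclos : Closed G (gf G s.a s.b) s.b := closed_sub_right hn hnc hinv.hcl hne
      refine ⟨⟨h1, hinv.hgb, fun h => hinv.hbf h.symm, fun h => hinv.haf h.symm,
        hinv.hab.symm, hclos⟩, ?_, ?_⟩
      · have hx'cands : x' ∈ cycArc n (gf G s.a s.b) s.b ∨ x' = gf G s.a s.b ∨ x' = s.b := by
          rcases hstep with rfl | hadj
          · exact Or.inl hx1
          · exact hclos x hx1 x' hadj
        rcases hx'cands with h | h | h
        · exact h
        · exact absurd (h1.trans h.symm) (hnocol' s.fr)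
        · exact absurd (hinv.hgb.trans h.symm) (hnocol' s.gb)
      · refine phi_lt_of_measure_lt _ _ ?_ hmd0
        show (s.b - gf G s.a s.b).val < (s.b - s.a).val
        obtain ⟨hg1, hg2⟩ := hgarc
        have hrw : s.b - gf G s.a s.b = (s.b - s.a) - (gf G s.a s.b - s.a) := by abel
        have s2 := svals (gf G s.a s.b - s.a) (s.b - s.a); rw [← hrw] at s2
        rcases s2 with ⟨c1, c2⟩ | ⟨c1, c2⟩ <;> omega
  · -- marching phase
    have hmd : marchdist G s = (s.a - s.pos s.fr).val + 1 := by rw [marchdist, if_neg h1]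
    by_cases h2 : s.pos s.fr = s.a
    · -- jump from a to g
      have hs : step G s x =
          ⟨Function.update s.pos s.fr (gf G s.a s.b), s.ga, s.gb, s.fr, s.a, s.b⟩ := by
        unfold step; rw [if_neg h1, if_pos h2]
      rw [hs] at hnocol' ⊢
      dsimp only at hnocol' ⊢
      refine ⟨⟨by dsimp only; rw [Function.update_of_ne hinv.haf]; exact hinv.hga,
        by dsimp only; rw [Function.update_of_ne hinv.hbf]; exact hinv.hgb,
        hinv.hab, hinv.haf, hinv.hbf, hinv.hcl⟩, ?_, ?_⟩
      · have hx'cands : x' ∈ cycArc n s.a s.b ∨ x' = s.a ∨ x' = s.b := by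
          rcases hstep with rfl | hadj
          · exact Or.inl hx
          · exact hinv.hcl x hx x' hadj
        rcases hx'cands with h | h | h
        · exact h
        · refine absurd ?_ (hnocol' s.ga)
          rw [Function.update_of_ne hinv.haf, hinv.hga, h]
        · refine absurd ?_ (hnocol' s.gb)
          rw [Function.update_of_ne hinv.hbf, hinv.hgb, h]
      · refine phi_lt_of_march _ _ rfl rfl ?_
        show marchdist G _ < marchdist G s
        rw [hmd, h2, sub_self_val]
        have : marchdist G ⟨Function.update s.pos s.fr (gf G s.a s.b), s.ga, s.gb, s.fr,
            s.a, s.b⟩ = 0 := by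
          rw [marchdist, if_pos]
          show Function.update s.pos s.fr (gf G s.a s.b) s.fr = gf G s.a s.b
          rw [Function.update_self]
        omega
    · -- march one step along the cycle
      have hs : step G s x =
          ⟨Function.update s.pos s.fr (s.pos s.fr + 1), s.ga, s.gb, s.fr, s.a, s.b⟩ := by
        unfold step; rw [if_neg h1, if_neg h2]
      rw [hs] at hnocol' ⊢
      dsimp only at hnocol' ⊢
      refine ⟨⟨by dsimp only; rw [Function.update_of_ne hinv.haf]; exact hinv.hga,
        by dsimp only; rw [Function.update_of_ne hinv.hbf]; exact hinv.hgb,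
        hinv.hab, hinv.haf, hinv.hbf, hinv.hcl⟩, ?_, ?_⟩
      · have hx'cands : x' ∈ cycArc n s.a s.b ∨ x' = s.a ∨ x' = s.b := by
          rcases hstep with rfl | hadj
          · exact Or.inl hx
          · exact hinv.hcl x hx x' hadj
        rcases hx'cands with h | h | h
        · exact h
        · refine absurd ?_ (hnocol' s.ga)
          rw [Function.update_of_ne hinv.haf, hinv.hga, h]
        · refine absurd ?_ (hnocol' s.gb)
          rw [Function.update_of_ne hinv.hbf, hinv.hgb, h]
      · refine phi_lt_of_march _ _ rfl rfl ?_
        have hca : (s.a - s.pos s.fr).val ≠ 0 := by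
          intro h
          exact h2 (sub_val_inj (u := s.a) (v := s.pos s.fr)
            (by rw [h, sub_self_val]) |>.symm ▸ rfl)
        rw [hmd]
        rw [marchdist]
        split
        · omega
        · show (s.a - Function.update s.pos s.fr (s.pos s.fr + 1) s.fr).val + 1 < _
          rw [Function.update_self]
          have hrw : s.a - (s.pos s.fr + 1) = (s.a - s.pos s.fr) - 1 := by abel
          have s1 := svals (1 : Fin n) (s.a - s.pos s.fr)
          rw [← hrw, val_one' hn] at s1
          rcases s1 with ⟨c1, c2⟩ | ⟨c1, c2⟩ <;> omega
end SCRAux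

lemma histList_succ {V : Type*} (r : ℕ → V) (t : ℕ) :
    histList r (t + 1) = histList r t ++ [r t] := by
  unfold histList
  rw [List.range_succ, List.map_append]
  rfl

/-- Let `n ≥ 4` and let `G` be a simple graph on the vertices
`v_0, …, v_{n-1}` (here `Fin n`) containing the Hamiltonian cycle
`v_0 v_1 ⋯ v_{n-1} v_0`, in which no two chords cross.  Suppose that in the game of
Surrounding Cops and Robbers on `G` a position is reached in which two cops occupy
the endpoints of an edge `v_i v_j` of `G` and the robber occupies a vertex `r0` of
the arc `X = {v_{i+1}, …, v_{j-1}}` (indices modulo `n`); the third cop stands at an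
arbitrary vertex `c3`.  Then the cop player, using these two cops together with the
one additional cop, has a strategy guaranteeing that the robber never occupies a
vertex outside `X`, and that after a finite number of moves either the robber is
surrounded or a position is reached in which two cops occupy the endpoints of an
edge `v_k v_l` of `G` and the robber occupies a vertex of the arc
`{v_{k+1}, …, v_{l-1}}`, which is a proper subset of `X`. -/
theorem outerplanar_shrink_robber_territory {n : ℕ} [NeZero n] (hn : 4 ≤ n)
    (G : SimpleGraph (Fin n)) (hham : ∀ t : Fin n, G.Adj t (t + 1))
    (hnocross : ∀ a b c d : Fin n, IsChord G a b → IsChord G c d →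
      a < c → c < b → b < d → False)
    (i j : Fin n) (hedge : G.Adj i j)
    (r0 : Fin n) (hr0 : r0 ∈ cycArc n i j) (c3 : Fin n) (hc3 : c3 ≠ r0) :
    ∃ F : List (Fin n) → Fin 3 → Fin n,
      F [] = ![i, j, c3] ∧ ValidCopStrategy G F ∧
        ∀ r : ℕ → Fin n, LegalPlayFrom G F r0 r →
          (∀ t, r t ∈ cycArc n i j) ∧
          ∃ T : ℕ, SurroundedAt G F r T ∨
            ∃ k l : Fin n, G.Adj k l ∧
              (∃ i1 i2 : Fin 3, i1 ≠ i2 ∧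
                F (histList r T) i1 = k ∧ F (histList r T) i2 = l) ∧
              r T ∈ cycArc n k l ∧ cycArc n k l ⊂ cycArc n i j := by
  classical
  refine ⟨fun h => (h.foldl (SCRAux.step G) ⟨![i, j, c3], 0, 1, 2, i, j⟩).pos, rfl, ?_, ?_⟩
  · intro h x idx
    simp only [List.foldl_append, List.foldl_cons, List.foldl_nil]
    exact SCRAux.step_valid hham _ x idx
  · intro r hr
    exfalso
    obtain ⟨hrz, hrstep, hrcol⟩ := hr
    set s0 : SCRAux.St n := ⟨![i, j, c3], 0, 1, 2, i, j⟩ with hs0def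
    set S : ℕ → SCRAux.St n := fun t => (histList r t).foldl (SCRAux.step G) s0 with hSdef
    have hSsucc : ∀ t, S (t + 1) = SCRAux.step G (S t) (r t) := by
      intro t
      show (histList r (t + 1)).foldl _ s0 = _
      rw [histList_succ, List.foldl_append]
      rfl
    have hcol : ∀ t idx, (S (t + 1)).pos idx ≠ r (t + 1) := fun t idx => hrcol t idx
    have nocol : ∀ t idx, (S t).pos idx ≠ r t := by
      intro t
      cases t with
      | zero =>
        intro idx
        have h1 := (SCRAux.mem_arc_ne hr0).1
        have h2 := (SCRAux.mem_arc_ne hr0).2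
        rw [hrz]
        fin_cases idx
        · exact fun h => h1 h.symm
        · exact fun h => h2 h.symm
        · exact fun h => hc3 h
      | succ t' => exact hcol t'
    have key : ∀ t, SCRAux.Inv G (S t) ∧ r t ∈ cycArc n (S t).a (S t).b := by
      intro t
      induction t with
      | zero =>
        refine ⟨⟨rfl, rfl, ?_, ?_, ?_, SCRAux.closed_of_adj hn hnocross hedge⟩, ?_⟩
        · show (0 : Fin 3) ≠ 1; decide
        · show (0 : Fin 3) ≠ 2; decide
        · show (1 : Fin 3) ≠ 2; decide
        show r 0 ∈ cycArc n i j
        rw [hrz]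
        exact hr0
      | succ t ih =>
        have hmain := SCRAux.step_main hn hham hnocross (S t) (r t) (r (t + 1)) ih.1 ih.2
          (nocol t) (hrstep t) (by rw [← hSsucc t]; exact hcol t)
        rw [hSsucc t]
        exact ⟨hmain.1, hmain.2.1⟩
    have dec : ∀ t, SCRAux.phi G (S (t + 1)) < SCRAux.phi G (S t) := by
      intro t
      have hmain := SCRAux.step_main hn hham hnocross (S t) (r t) (r (t + 1)) (key t).1
        (key t).2 (nocol t) (hrstep t) (by rw [← hSsucc t]; exact hcol t)
      rw [hSsucc t]
      exact hmain.2.2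
    have mono : ∀ t, SCRAux.phi G (S t) + t ≤ SCRAux.phi G (S 0) := by
      intro t
      induction t with
      | zero => omega
      | succ t ih =>
        have := dec t
        omega
    have := mono (SCRAux.phi G (S 0) + 1)
    omega
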